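/- For any d, q ∈ ℕ and any antichain W ⊆ [q]^d (with respect to the coordinatewise order ≼), the sets {H^q_j : j ∈ W ∪ {−∞, ∞}} form a partition of ℝ^d; that is, they are pairwise disjoint and their union is ℝ^d. -/
import Mathlib


open Set

/-- The half-open hypercube `H^q_j = ∏_ℓ [(j_ℓ - 1)/q, j_ℓ/q)`. -/
def Hcube (d q : ℕ) (j : Fin d → ℕ) : Set (Fin d → ℝ) :=
  {x | ∀ ℓ : Fin d, ((j ℓ : ℝ) - 1) / q ≤ x ℓ ∧ x ℓ < (j ℓ : ℝ) / q}

/-- `H^q_∞`: points above some hypercube of the antichain but in none of them. -/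
def Hinf (d q : ℕ) (W : Set (Fin d → ℕ)) : Set (Fin d → ℝ) :=
  ⋃ j ∈ W, {x | x ∉ Hcube d q j ∧ ∃ x' ∈ Hcube d q j, x' ≤ x}

/-- `H^q_{-∞}`: the remaining points. -/
def Hneg (d q : ℕ) (W : Set (Fin d → ℕ)) : Set (Fin d → ℝ) :=
  ((⋃ j ∈ W, Hcube d q j) ∪ Hinf d q W)ᶜ

/-- Lemma A.2: for any antichain `W ⊆ [q]^d`, the sets `{H^q_j : j ∈ W} ∪ {H^q_∞, H^q_{-∞}}`
form a partition of `ℝ^d`. -/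
theorem statement18 (d q : ℕ) (hd : 0 < d) (hq : 0 < q)
    (W : Set (Fin d → ℕ)) (hWq : ∀ j ∈ W, ∀ ℓ : Fin d, 1 ≤ j ℓ ∧ j ℓ ≤ q)
    (hanti : IsAntichain (· ≤ ·) W) :
    (∀ j ∈ W, ∀ j' ∈ W, j ≠ j' → Disjoint (Hcube d q j) (Hcube d q j')) ∧
    (∀ j ∈ W, Disjoint (Hcube d q j) (Hinf d q W)) ∧
    (∀ j ∈ W, Disjoint (Hcube d q j) (Hneg d q W)) ∧
    Disjoint (Hinf d q W) (Hneg d q W) ∧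
    ((⋃ j ∈ W, Hcube d q j) ∪ Hinf d q W ∪ Hneg d q W) = Set.univ := by
  have hq' : (0:ℝ) < q := by exact_mod_cast hq
  -- key: if a < b (ℕ) then the intervals are disjoint
  have key : ∀ (a b : ℕ) (y : ℝ), a < b → y < (a:ℝ)/q → ((b:ℝ)-1)/q ≤ y → False := by
    intro a b y hab h1 h2
    have : ((b:ℝ) - 1)/q < (a:ℝ)/q := lt_of_le_of_lt h2 h1
    have hba : (b:ℝ) - 1 < a := by
      have := (div_lt_div_iff₀ hq' hq').mp this
      nlinarith
    have : (b:ℝ) < a + 1 := by linarith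
    have : b < a + 1 := by exact_mod_cast this
    omega
  have cube_disj : ∀ j j' : Fin d → ℕ, j ≠ j' →
      Disjoint (Hcube d q j) (Hcube d q j') := by
    intro j j' hne
    rw [Set.disjoint_left]
    intro x hx hx'
    obtain ⟨ℓ, hℓ⟩ := Function.ne_iff.mp hne
    rcases lt_or_gt_of_ne hℓ with h | h
    · exact key _ _ _ h (hx ℓ).2 (hx' ℓ).1
    · exact key _ _ _ h (hx' ℓ).2 (hx ℓ).1
  have cube_inf : ∀ j ∈ W, Disjoint (Hcube d q j) (Hinf d q W) := by
    intro j hj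
    rw [Set.disjoint_left]
    intro x hx hxi
    simp only [Hinf, Set.mem_iUnion, Set.mem_setOf_eq] at hxi
    obtain ⟨j', hj', hxnot, x', hx', hle⟩ := hxi
    have hle' : j' ≤ j := by
      intro ℓ
      have h1 : ((j' ℓ : ℝ) - 1)/q ≤ x' ℓ := (hx' ℓ).1
      have h2 : x ℓ < (j ℓ : ℝ)/q := (hx ℓ).2
      have h3 : x' ℓ ≤ x ℓ := hle ℓ
      have : ((j' ℓ : ℝ) - 1)/q < (j ℓ : ℝ)/q := by linarith
      have h4 : (j' ℓ : ℝ) - 1 < j ℓ := by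
        have := (div_lt_div_iff₀ hq' hq').mp this
        nlinarith
      have : (j' ℓ : ℝ) < j ℓ + 1 := by linarith
      have h5 : j' ℓ < j ℓ + 1 := by exact_mod_cast this
      exact Nat.lt_succ_iff.mp h5
    by_cases heq : j' = j
    · exact hxnot (heq ▸ hx)
    · exact hanti hj' hj heq hle'
  refine ⟨fun j _ j' _ hne => cube_disj j j' hne, cube_inf, ?_, ?_, ?_⟩
  · intro j hj
    rw [Set.disjoint_left]
    intro x hx hxn
    exact hxn (Or.inl (Set.mem_biUnion hj hx))
  · rw [Set.disjoint_left]
    intro x hx hxn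
    exact hxn (Or.inr hx)
  · rw [Hneg, Set.union_compl_self]
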